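/- Suppose on the regular d-ary tree with passage times T(x) = Σ_{y ≤ x} f(y) U_y one has P(T(∞) < ∞) = 1. Then almost surely there is a unique infinite line of descent in the infinite cluster A_∞ = {x : T(x) < T(∞)}: a unique sequence (spine_n)_{n≥1} with spine_n ∈ B(n) ∩ A_∞ and spine_n the parent of spine_{n+1} for all n. -/

import Mathlib

open MeasureTheory ProbabilityTheory Filter
open scoped ENNReal

noncomputable section

/-- Passage time `T(x) = ∑_{y ≤ x} α^{|y|} U_y` on the `d`-ary tree (vertices are lists over
`Fin d`, ancestors are prefixes). -/
def pTime (d : ℕ) (α : ℝ) {Ω : Type*} (U : List (Fin d) → Ω → ℝ)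
    (x : List (Fin d)) (ω : Ω) : ℝ :=
  ∑ k ∈ Finset.range (x.length + 1), α ^ k * U (x.take k) ω

/-- `T(n) = min { T(x) : |x| = n }`. -/
def genTime (d : ℕ) (α : ℝ) {Ω : Type*} (U : List (Fin d) → Ω → ℝ)
    (n : ℕ) (ω : Ω) : ℝ :=
  ⨅ x : {l : List (Fin d) // l.length = n}, pTime d α U x.1 ω

/-- `T(∞)`, the time to percolate to infinity. -/
def percTime (d : ℕ) (α : ℝ) {Ω : Type*} (U : List (Fin d) → Ω → ℝ)
    (ω : Ω) : ℝ≥0∞ :=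
  ⨆ n, ENNReal.ofReal (genTime d α U n ω)

namespace UniqueSpine

instance lenFinite (d m : ℕ) : Finite {l : List (Fin d) // l.length = m} :=
  Finite.of_equiv (List.Vector (Fin d) m) (Equiv.refl _)

lemma lenNonempty (d m : ℕ) (hd : 0 < d) : Nonempty {l : List (Fin d) // l.length = m} :=
  ⟨⟨List.replicate m ⟨0, hd⟩, by simp⟩⟩

/-- infimum over generation-`m` descendants of `x`. -/
def Mx (d : ℕ) (α : ℝ) {Ω : Type*} (U : List (Fin d) → Ω → ℝ)
    (x : List (Fin d)) (m : ℕ) (ω : Ω) : ℝ≥0∞ :=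
  ⨅ t : {l : List (Fin d) // l.length = m}, ENNReal.ofReal (pTime d α U (x ++ t.1) ω)

/-- percolation time through `x`. -/
def Wx (d : ℕ) (α : ℝ) {Ω : Type*} (U : List (Fin d) → Ω → ℝ)
    (x : List (Fin d)) (ω : Ω) : ℝ≥0∞ :=
  ⨆ m, Mx d α U x m ω

def tailSum (d : ℕ) (α : ℝ) {Ω : Type*} (U : List (Fin d) → Ω → ℝ)
    (x t : List (Fin d)) (ω : Ω) : ℝ :=
  ∑ k ∈ Finset.range t.length, α ^ (x.length + 1 + k) * U (x ++ t.take (k+1)) ω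

def Sx (d : ℕ) (α : ℝ) {Ω : Type*} (U : List (Fin d) → Ω → ℝ)
    (x : List (Fin d)) (ω : Ω) : ℝ≥0∞ :=
  ⨆ m, ⨅ t : {l : List (Fin d) // l.length = m},
    ENNReal.ofReal (tailSum d α U x t.1 ω)

variable {Ω : Type*} {d : ℕ} {α : ℝ} {U : List (Fin d) → Ω → ℝ} {ω : Ω}

lemma pTime_append (x t : List (Fin d)) (ω : Ω) :
    pTime d α U (x ++ t) ω = pTime d α U x ω + tailSum d α U x t ω := by
  unfold pTime tailSum
  have hlen : (x ++ t).length + 1 = (x.length + 1) + t.length := by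
    simp [List.length_append]; omega
  rw [hlen, Finset.sum_range_add]
  congr 1
  · refine Finset.sum_congr rfl fun k hk => ?_
    have hk' : k ≤ x.length := by simpa using Nat.lt_succ_iff.mp (Finset.mem_range.mp hk)
    rw [List.take_append, Nat.sub_eq_zero_of_le hk']
    simp
  · refine Finset.sum_congr rfl fun k hk => ?_
    rw [List.take_append, List.take_of_length_le (by omega)]
    have h2 : x.length + 1 + k - x.length = k + 1 := by omega
    rw [h2]

lemma tailSum_nonneg (hα : 0 < α) (hU : ∀ y, 0 ≤ U y ω) (x t : List (Fin d)) :
    0 ≤ tailSum d α U x t ω :=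
  Finset.sum_nonneg fun k _ => mul_nonneg (le_of_lt (pow_pos hα _)) (hU _)

lemma pTime_nonneg (hα : 0 < α) (hU : ∀ y, 0 ≤ U y ω) (x : List (Fin d)) :
    0 ≤ pTime d α U x ω :=
  Finset.sum_nonneg fun k _ => mul_nonneg (le_of_lt (pow_pos hα _)) (hU _)

lemma pTime_le_append (hα : 0 < α) (hU : ∀ y, 0 ≤ U y ω) (x t : List (Fin d)) :
    pTime d α U x ω ≤ pTime d α U (x ++ t) ω := by
  rw [pTime_append]
  exact le_add_of_nonneg_right (tailSum_nonneg hα hU x t)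

lemma pTime_child (x : List (Fin d)) (c : Fin d) (ω : Ω) :
    pTime d α U (x ++ [c]) ω = pTime d α U x ω + α ^ (x.length + 1) * U (x ++ [c]) ω := by
  rw [pTime_append]
  simp [tailSum]

end UniqueSpine
namespace UniqueSpine
variable {Ω : Type*} {d : ℕ} {α : ℝ} {U : List (Fin d) → Ω → ℝ} {ω : Ω}

lemma ofReal_iInf_of_finite {ι : Type*} [Finite ι] [Nonempty ι] (f : ι → ℝ) :
    ENNReal.ofReal (⨅ i, f i) = ⨅ i, ENNReal.ofReal (f i) := by
  obtain ⟨i₀, h₀⟩ := exists_eq_ciInf_of_finite (f := f)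
  refine le_antisymm (le_iInf fun i => ENNReal.ofReal_le_ofReal
    (ciInf_le (Set.Finite.bddBelow (Set.finite_range f)) i)) ?_
  exact (iInf_le _ i₀).trans (by rw [h₀])

lemma Mx_le (x : List (Fin d)) {m : ℕ} (t : List (Fin d)) (ht : t.length = m) :
    Mx d α U x m ω ≤ ENNReal.ofReal (pTime d α U (x ++ t) ω) :=
  iInf_le (fun t : {l : List (Fin d) // l.length = m} =>
    ENNReal.ofReal (pTime d α U (x ++ t.1) ω)) ⟨t, ht⟩

lemma Mx_mono (hα : 0 < α) (hU : ∀ y, 0 ≤ U y ω) (x : List (Fin d)) :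
    Monotone (fun m => Mx d α U x m ω) := by
  refine monotone_nat_of_le_succ fun m => ?_
  refine le_iInf fun t => ?_
  have h1 : (x ++ t.1.take m) ++ t.1.drop m = x ++ t.1 := by
    rw [List.append_assoc, List.take_append_drop]
  calc Mx d α U x m ω ≤ ENNReal.ofReal (pTime d α U (x ++ t.1.take m) ω) :=
        Mx_le x _ (by simp [t.2])
    _ ≤ ENNReal.ofReal (pTime d α U (x ++ t.1) ω) := by
        refine ENNReal.ofReal_le_ofReal ?_
        rw [← h1]
        exact pTime_le_append hα hU _ _

lemma Mx_zero (x : List (Fin d)) : Mx d α U x 0 ω = ENNReal.ofReal (pTime d α U x ω) := by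
  refine le_antisymm ((Mx_le x ([]) rfl).trans (by simp)) (le_iInf fun t => ?_)
  have : t.1 = [] := List.length_eq_zero_iff.mp t.2
  simp [this]

/-- equivalence between children-indexed extensions. -/
def consEquiv (d m : ℕ) : (Fin d × {l : List (Fin d) // l.length = m}) ≃
    {l : List (Fin d) // l.length = m + 1} where
  toFun p := ⟨p.1 :: p.2.1, by simp [p.2.2]⟩
  invFun t :=
    match t with
    | ⟨[], h⟩ => absurd h (by simp)
    | ⟨c :: r, h⟩ => (c, ⟨r, by simpa using h⟩)
  left_inv p := rfl
  right_inv t := by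
    obtain ⟨l, h⟩ := t
    cases l with
    | nil => simp at h
    | cons c r => rfl

lemma Mx_succ (x : List (Fin d)) (m : ℕ) :
    Mx d α U x (m+1) ω = ⨅ c : Fin d, Mx d α U (x ++ [c]) m ω := by
  unfold Mx
  rw [← (consEquiv d m).iInf_comp
    (g := fun t : {l : List (Fin d) // l.length = m + 1} =>
      ENNReal.ofReal (pTime d α U (x ++ t.1) ω)), iInf_prod]
  refine iInf_congr fun c => iInf_congr fun t => ?_
  simp only [consEquiv, Equiv.coe_fn_mk]
  rw [List.append_cons]

lemma iSup_iInf_comm {ι : Type*} [Finite ι] [Nonempty ι] (f : ι → ℕ → ℝ≥0∞)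
    (hf : ∀ i, Monotone (f i)) : ⨆ m, ⨅ i, f i m = ⨅ i, ⨆ m, f i m := by
  refine le_antisymm (iSup_le fun m => le_iInf fun i => le_iSup_of_le m (iInf_le _ i)) ?_
  refine le_of_forall_lt fun b hb => ?_
  have h1 : ∀ i, ∃ m, b < f i m := by
    intro i
    have := hb.trans_le (iInf_le _ i)
    exact lt_iSup_iff.mp this
  choose M hM using h1
  haveI := Fintype.ofFinite ι
  set N := Finset.univ.sup M with hN
  have h2 : ∀ i, b < f i N := fun i =>
    (hM i).trans_le (hf i (Finset.le_sup (Finset.mem_univ i)))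
  obtain ⟨i₀, hi₀⟩ := exists_eq_ciInf_of_finite (f := fun i => f i N)
  calc b < f i₀ N := h2 i₀
    _ = ⨅ i, f i N := hi₀
    _ ≤ ⨆ m, ⨅ i, f i m := le_iSup (fun m => ⨅ i, f i m) N

lemma Wx_child (hd : 0 < d) (hα : 0 < α) (hU : ∀ y, 0 ≤ U y ω) (x : List (Fin d)) :
    Wx d α U x ω = ⨅ c : Fin d, Wx d α U (x ++ [c]) ω := by
  haveI : Nonempty (Fin d) := ⟨⟨0, hd⟩⟩
  have h1 : Wx d α U x ω = ⨆ m, Mx d α U x (m+1) ω := by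
    refine le_antisymm (iSup_le fun m => le_iSup_of_le m (Mx_mono hα hU x (Nat.le_succ m)))
      (iSup_le fun m => le_iSup_of_le (m+1) (le_refl _))
  rw [h1]
  simp_rw [Mx_succ]
  exact iSup_iInf_comm (fun c m => Mx d α U (x ++ [c]) m ω)
    (fun c => Mx_mono hα hU (x ++ [c]))

lemma Wx_mono_child (hd : 0 < d) (hα : 0 < α) (hU : ∀ y, 0 ≤ U y ω) (x : List (Fin d)) (c : Fin d) :
    Wx d α U x ω ≤ Wx d α U (x ++ [c]) ω := by
  rw [Wx_child hd hα hU x]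
  exact iInf_le _ c

lemma Wx_attain (hd : 0 < d) (hα : 0 < α) (hU : ∀ y, 0 ≤ U y ω) (x : List (Fin d)) :
    ∃ c : Fin d, Wx d α U (x ++ [c]) ω = Wx d α U x ω := by
  haveI : Nonempty (Fin d) := ⟨⟨0, hd⟩⟩
  obtain ⟨c, hc⟩ := exists_eq_ciInf_of_finite (f := fun c : Fin d => Wx d α U (x ++ [c]) ω)
  exact ⟨c, by rw [hc, Wx_child hd hα hU x]⟩

lemma percTime_eq_Wx_nil (hd : 0 < d) : percTime d α U ω = Wx d α U ([]) ω := by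
  unfold percTime Wx genTime Mx
  refine iSup_congr fun n => ?_
  haveI := lenNonempty d n hd
  rw [ofReal_iInf_of_finite]
  simp

end UniqueSpine
namespace UniqueSpine
variable {Ω : Type*} {d : ℕ} {α : ℝ} {U : List (Fin d) → Ω → ℝ} {ω : Ω}

/-- decomposition `W(x) = T(x) + S(x)`. -/
lemma Wx_decomp (hd : 0 < d) (hα : 0 < α) (hU : ∀ y, 0 ≤ U y ω) (x : List (Fin d)) :
    Wx d α U x ω = ENNReal.ofReal (pTime d α U x ω) + Sx d α U x ω := by
  unfold Wx Sx
  rw [ENNReal.add_iSup]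
  refine iSup_congr fun m => ?_
  haveI := lenNonempty d m hd
  rw [ENNReal.add_iInf]
  unfold Mx
  refine iInf_congr fun t => ?_
  rw [pTime_append, ENNReal.ofReal_add (pTime_nonneg hα hU x) (tailSum_nonneg hα hU x t.1)]

/-- strict growth along one step. -/
lemma pTime_lt_Mx_one (hd : 0 < d) (hα : 0 < α) (hU : ∀ y, 0 < U y ω) (x : List (Fin d)) :
    ENNReal.ofReal (pTime d α U x ω) < Mx d α U x 1 ω := by
  haveI := lenNonempty d 1 hd
  obtain ⟨t₀, ht₀⟩ := exists_eq_ciInf_of_finite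
    (f := fun t : {l : List (Fin d) // l.length = 1} =>
      ENNReal.ofReal (pTime d α U (x ++ t.1) ω))
  obtain ⟨c, hc⟩ : ∃ c : Fin d, t₀.1 = [c] := by
    obtain ⟨l, hl⟩ := t₀
    cases l with
    | nil => simp at hl
    | cons c r =>
      cases r with
      | nil => exact ⟨c, rfl⟩
      | cons a s => simp at hl
  have hU0 : ∀ y, 0 ≤ U y ω := fun y => (hU y).le
  have hlt : pTime d α U x ω < pTime d α U (x ++ [c]) ω := by
    rw [pTime_child]
    have : 0 < α ^ (x.length + 1) * U (x ++ [c]) ω :=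
      mul_pos (pow_pos hα _) (hU _)
    linarith
  have hpos : 0 < pTime d α U (x ++ [c]) ω :=
    lt_of_le_of_lt (pTime_nonneg hα hU0 x) hlt
  calc ENNReal.ofReal (pTime d α U x ω)
      < ENNReal.ofReal (pTime d α U (x ++ [c]) ω) :=
        (ENNReal.ofReal_lt_ofReal_iff hpos).mpr hlt
    _ = Mx d α U x 1 ω := by rw [← hc, ht₀]; rfl

lemma Mx_le_Wx (x : List (Fin d)) (m : ℕ) : Mx d α U x m ω ≤ Wx d α U x ω :=
  le_iSup (fun m => Mx d α U x m ω) m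

end UniqueSpine
namespace UniqueSpine
variable {Ω : Type*} {d : ℕ} {α : ℝ} {U : List (Fin d) → Ω → ℝ} {ω : Ω}

lemma expMeasure_singleton (c : ℝ) : expMeasure 1 {c} = 0 := by
  show gammaMeasure 1 1 {c} = 0
  unfold gammaMeasure
  rw [withDensity_apply _ (measurableSet_singleton c)]
  exact setLIntegral_measure_zero _ _ (measure_singleton c)

lemma expMeasure_Iic_zero : expMeasure 1 (Set.Iic 0) = 0 := by
  show gammaMeasure 1 1 (Set.Iic 0) = 0
  unfold gammaMeasure
  rw [withDensity_apply _ measurableSet_Iic,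
    setLIntegral_congr (Iio_ae_eq_Iic (a := (0:ℝ))).symm,
    setLIntegral_congr_fun measurableSet_Iio
      (fun x hx => gammaPDF_of_neg hx)]
  simp

lemma indep_of_le {mΩ : MeasurableSpace Ω} {μ : Measure Ω}
    {m₁ m₂ m₁' m₂' : MeasurableSpace Ω}
    (h : Indep m₁ m₂ μ) (h1 : m₁' ≤ m₁) (h2 : m₂' ≤ m₂) : Indep m₁' m₂' μ := by
  rw [Indep_iff] at h ⊢
  exact fun t1 t2 ht1 ht2 => h t1 t2 (h1 _ ht1) (h2 _ ht2)

lemma indepFun_eq_zero {mΩ : MeasurableSpace Ω} {μ : Measure Ω} [IsProbabilityMeasure μ]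
    {X Y : Ω → ℝ} (hX : Measurable X) (hY : Measurable Y) (h : IndepFun X Y μ)
    (hY' : ∀ c : ℝ, μ.map Y {c} = 0) : μ {ω | X ω = Y ω} = 0 := by
  have hdiag : MeasurableSet {p : ℝ × ℝ | p.1 = p.2} :=
    (isClosed_eq continuous_fst continuous_snd).measurableSet
  have hset : {ω | X ω = Y ω} = (fun ω => (X ω, Y ω)) ⁻¹' {p | p.1 = p.2} := rfl
  rw [hset, ← Measure.map_apply (hX.prodMk hY) hdiag,
    (indepFun_iff_map_prod_eq_prod_map_map hX.aemeasurable hY.aemeasurable).1 h,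
    Measure.prod_apply hdiag]
  have hslice : ∀ x : ℝ, (Prod.mk x ⁻¹' {p : ℝ × ℝ | p.1 = p.2}) = {x} := by
    intro x; ext y; simp [eq_comm]
  simp_rw [hslice, hY']
  simp

lemma measurable_pTime' {m' : MeasurableSpace Ω} {x₁ : List (Fin d)} (v : List (Fin d))
    (hU : ∀ y, y ≠ x₁ → Measurable[m'] (U y)) (hv : ∀ k, k ≤ v.length → v.take k ≠ x₁) :
    Measurable[m'] (fun ω => pTime d α U v ω) := by
  unfold pTime
  refine Finset.measurable_sum _ fun k hk => ?_
  exact (hU _ (hv k (Nat.lt_succ_iff.mp (Finset.mem_range.mp hk)))).const_mul _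

lemma measurable_Wx' {m' : MeasurableSpace Ω} {x₁ : List (Fin d)} (x₂ : List (Fin d))
    (hU : ∀ y, y ≠ x₁ → Measurable[m'] (U y))
    (hx : ∀ (t : List (Fin d)) (k : ℕ), k ≤ (x₂ ++ t).length → (x₂ ++ t).take k ≠ x₁) :
    Measurable[m'] (fun ω => Wx d α U x₂ ω) := by
  unfold Wx Mx
  refine Measurable.iSup fun m => Measurable.iInf fun t => ?_
  exact ENNReal.measurable_ofReal.comp (measurable_pTime' _ hU (hx t.1))

lemma measurable_Sx' {m' : MeasurableSpace Ω} (x₁ : List (Fin d))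
    (hU : ∀ y, y ≠ x₁ → Measurable[m'] (U y))
    (hx : ∀ (t : List (Fin d)) (k : ℕ), k < t.length → x₁ ++ t.take (k+1) ≠ x₁) :
    Measurable[m'] (fun ω => Sx d α U x₁ ω) := by
  unfold Sx tailSum
  refine Measurable.iSup fun m => Measurable.iInf fun t => ?_
  refine ENNReal.measurable_ofReal.comp (Finset.measurable_sum _ fun k hk => ?_)
  exact (hU _ (hx t.1 k (Finset.mem_range.mp hk))).const_mul _

lemma take_z_ne (z : List (Fin d)) (c₁ : Fin d) :
    ∀ k, k ≤ z.length → z.take k ≠ z ++ [c₁] := by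
  intro k hk h
  have := congrArg List.length h
  simp [List.length_take] at this
  omega

lemma take_x2_ne (z : List (Fin d)) {c₁ c₂ : Fin d} (hc : c₁ ≠ c₂) :
    ∀ (t : List (Fin d)) (k : ℕ), k ≤ ((z ++ [c₂]) ++ t).length →
      ((z ++ [c₂]) ++ t).take k ≠ z ++ [c₁] := by
  intro t k _ h
  set n := z.length + 1 with hn
  have hlen : (z ++ [c₂]).length = n := by simp [hn]
  rcases lt_or_ge k n with hlt | hge
  · have := congrArg List.length h
    simp [List.length_take] at this
    omega
  · rw [List.take_append, List.take_of_length_le (by omega)] at h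
    have hlenh : (z ++ [c₂]).length + (t.take (k - (z ++ [c₂]).length)).length
        = (z ++ [c₁]).length := by rw [← List.length_append, h]
    have ht0 : t.take (k - (z ++ [c₂]).length) = [] := by
      apply List.length_eq_zero_iff.mp
      simp only [List.length_append, List.length_cons, List.length_nil] at hlenh ⊢
      omega
    rw [ht0, List.append_nil] at h
    have h2 : [c₂] = [c₁] := by rwa [List.append_cancel_left_eq] at h
    exact hc (by simpa using h2.symm)

lemma take_x1_ne (x₁ : List (Fin d)) :
    ∀ (t : List (Fin d)) (k : ℕ), k < t.length → x₁ ++ t.take (k+1) ≠ x₁ := by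
  intro t k hk h
  have := congrArg List.length h
  simp [List.length_take] at this
  rw [this] at hk
  simp at hk

end UniqueSpine
namespace UniqueSpine
variable {Ω : Type*} [MeasurableSpace Ω] {μ : Measure Ω} [IsProbabilityMeasure μ]
  {d : ℕ} {α : ℝ} {U : List (Fin d) → Ω → ℝ}

lemma ae_pos (hmeas : ∀ x, Measurable (U x))
    (hExp : ∀ x, Measure.map (U x) μ = expMeasure 1) :
    ∀ᵐ ω ∂μ, ∀ y : List (Fin d), 0 < U y ω := by
  rw [ae_all_iff]
  intro y
  rw [ae_iff]
  have hset : {ω | ¬ 0 < U y ω} = U y ⁻¹' (Set.Iic 0) := by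
    ext ω; simp [not_lt]
  rw [hset, ← Measure.map_apply (hmeas y) measurableSet_Iic, hExp y]
  exact expMeasure_Iic_zero

lemma tie_null (hd : 0 < d) (hα : 0 < α)
    (hmeas : ∀ x, Measurable (U x))
    (hInd : iIndepFun U μ)
    (hExp : ∀ x, Measure.map (U x) μ = expMeasure 1)
    (z : List (Fin d)) {c₁ c₂ : Fin d} (hc : c₁ ≠ c₂) :
    μ {ω | Wx d α U (z ++ [c₁]) ω = Wx d α U (z ++ [c₂]) ω
        ∧ Wx d α U (z ++ [c₁]) ω ≠ ⊤} = 0 := by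
  set x₁ := z ++ [c₁] with hx₁
  set x₂ := z ++ [c₂] with hx₂
  set n := z.length + 1 with hn
  set g : Ω → ℝ := fun ω =>
    ((Wx d α U x₂ ω).toReal - pTime d α U z ω - (Sx d α U x₁ ω).toReal) / α ^ n with hg
  -- measurability of `g` w.r.t. any σ-algebra making the other coordinates measurable
  have hgmeas : ∀ (m' : MeasurableSpace Ω), (∀ y, y ≠ x₁ → Measurable[m'] (U y)) →
      Measurable[m'] g := by
    intro m' hU
    have h1 : Measurable[m'] (fun ω => pTime d α U z ω) :=
      measurable_pTime' z hU (take_z_ne z c₁)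
    have h2 : Measurable[m'] (fun ω => Wx d α U x₂ ω) :=
      measurable_Wx' x₂ hU (take_x2_ne z hc)
    have h3 : Measurable[m'] (fun ω => Sx d α U x₁ ω) :=
      measurable_Sx' x₁ hU (take_x1_ne x₁)
    exact (((ENNReal.measurable_toReal.comp h2).sub h1).sub
      (ENNReal.measurable_toReal.comp h3)).div_const _
  -- the tie event forces `U x₁ = g`
  have hsub : ∀ ω, (∀ y, 0 < U y ω) →
      (Wx d α U x₁ ω = Wx d α U x₂ ω ∧ Wx d α U x₁ ω ≠ ⊤) → U x₁ ω = g ω := by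
    intro ω hpos ⟨hEq, hFin⟩
    have hU0 : ∀ y, 0 ≤ U y ω := fun y => (hpos y).le
    have hW1 : Wx d α U x₁ ω = ENNReal.ofReal (pTime d α U x₁ ω) + Sx d α U x₁ ω :=
      Wx_decomp hd hα hU0 x₁
    have hp : pTime d α U x₁ ω = pTime d α U z ω + α ^ n * U x₁ ω := pTime_child z c₁ ω
    have hS : Sx d α U x₁ ω ≠ ⊤ := by
      intro h
      apply hFin
      rw [hW1, h]
      simp
    have hreal : (Wx d α U x₂ ω).toReal
        = pTime d α U z ω + α ^ n * U x₁ ω + (Sx d α U x₁ ω).toReal := by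
      rw [← hEq, hW1, ENNReal.toReal_add ENNReal.ofReal_ne_top hS,
        ENNReal.toReal_ofReal (pTime_nonneg hα hU0 x₁), hp]
    have hαn : α ^ n ≠ 0 := pow_ne_zero _ (ne_of_gt hα)
    rw [hg]
    simp only
    rw [hreal]
    field_simp
    ring
  -- `U x₁ = g` is a null event
  have hnull : μ {ω | U x₁ ω = g ω} = 0 := by
    have hgm : Measurable g := hgmeas _ (fun y _ => hmeas y)
    set M₂ : MeasurableSpace Ω :=
      ⨆ y ∈ ({x₁}ᶜ : Set (List (Fin d))), MeasurableSpace.comap (U y) inferInstance with hM₂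
    have hUM2 : ∀ y, y ≠ x₁ → Measurable[M₂] (U y) := by
      intro y hy
      refine Measurable.of_comap_le ?_
      rw [hM₂]
      exact le_biSup (fun y : List (Fin d) => MeasurableSpace.comap (U y) inferInstance)
        (show y ∈ ({x₁}ᶜ : Set (List (Fin d))) by simpa using hy)
    have hIndep : Indep (MeasurableSpace.comap (U x₁) inferInstance) M₂ μ := by
      have := indep_iSup_of_disjoint (μ := μ)
        (m := fun y : List (Fin d) => MeasurableSpace.comap (U y) inferInstance)
        (fun i => (hmeas i).comap_le) hInd.iIndep
        (disjoint_compl_right : Disjoint ({x₁} : Set (List (Fin d))) {x₁}ᶜ)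
      simpa [iSup_singleton, hM₂] using this
    have hgM2 : Measurable[M₂] g := hgmeas M₂ hUM2
    have hIF : IndepFun g (U x₁) μ := by
      rw [IndepFun_iff_Indep]
      exact indep_of_le hIndep.symm hgM2.comap_le le_rfl
    have h0 := indepFun_eq_zero hgm (hmeas x₁) hIF
      (fun c => by rw [hExp x₁]; exact expMeasure_singleton c)
    have : {ω | U x₁ ω = g ω} = {ω | g ω = U x₁ ω} := by ext ω; exact ⟨Eq.symm, Eq.symm⟩
    rwa [this]
  -- combine
  have hposc : μ {ω | ¬ ∀ y, 0 < U y ω} = 0 := by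
    have := ae_pos (μ := μ) hmeas hExp
    rwa [ae_iff] at this
  refine measure_mono_null ?_ (measure_union_null hnull hposc)
  intro ω hω
  by_cases hp : ∀ y, 0 < U y ω
  · exact Or.inl (hsub ω hp hω)
  · exact Or.inr hp

end UniqueSpine
/-- if `P(T(∞) < ∞) = 1`, then almost surely there is a unique infinite line of
descent in the infinite cluster `A_∞ = {x : T(x) < T(∞)}`: a unique sequence `(spine_n)_{n ≥ 1}`
with `spine_n` of generation `n`, `spine_n ∈ A_∞`, and `spine_n` the parent of `spine_{n+1}`
(here `s k` stands for `spine_{k+1}`). -/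
theorem unique_infinite_line_of_descent
    {Ω : Type*} [MeasurableSpace Ω] (μ : Measure Ω) [IsProbabilityMeasure μ]
    (d : ℕ) (hd : 2 ≤ d) (α : ℝ) (hα : α ∈ Set.Ioo (0 : ℝ) 1)
    (U : List (Fin d) → Ω → ℝ) (hmeas : ∀ x, Measurable (U x))
    (hInd : iIndepFun U μ)
    (hExp : ∀ x, Measure.map (U x) μ = expMeasure 1)
    (hfin : ∀ᵐ ω ∂μ, percTime d α U ω < ⊤) :
    ∀ᵐ ω ∂μ, ∃! s : ℕ → List (Fin d), ∀ k : ℕ,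
      (s k).length = k + 1 ∧
      ENNReal.ofReal (pTime d α U (s k) ω) < percTime d α U ω ∧
      s k <+: s (k + 1) := by
  classical
  open UniqueSpine in
  have hd0 : 0 < d := by omega
  have hα0 : 0 < α := hα.1
  have hpos := UniqueSpine.ae_pos (μ := μ) hmeas hExp
  have htie : ∀ᵐ ω ∂μ, ∀ (z : List (Fin d)) (c₁ c₂ : Fin d), c₁ ≠ c₂ →
      ¬(UniqueSpine.Wx d α U (z ++ [c₁]) ω = UniqueSpine.Wx d α U (z ++ [c₂]) ω
        ∧ UniqueSpine.Wx d α U (z ++ [c₁]) ω ≠ ⊤) := by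
    rw [ae_all_iff]
    intro z
    rw [ae_all_iff]
    intro c₁
    rw [ae_all_iff]
    intro c₂
    by_cases hc : c₁ = c₂
    · exact Filter.Eventually.of_forall (fun ω h => absurd hc h)
    · have h0 := UniqueSpine.tie_null (μ := μ) hd0 hα0 hmeas hInd hExp z hc
      rw [measure_eq_zero_iff_ae_notMem] at h0
      filter_upwards [h0] with ω hω _
      exact hω
  filter_upwards [hfin, hpos, htie] with ω hfinω hposω htieω
  have hU0 : ∀ y, 0 ≤ U y ω := fun y => (hposω y).le
  have hWnil : UniqueSpine.Wx d α U ([]) ω = percTime d α U ω :=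
    (UniqueSpine.percTime_eq_Wx_nil hd0).symm
  -- the set of "good" candidate spines
  set Good : (ℕ → List (Fin d)) → Prop := fun t => ∀ k : ℕ,
      (t k).length = k + 1 ∧
      ENNReal.ofReal (pTime d α U (t k) ω) < percTime d α U ω ∧
      t k <+: t (k + 1) with hGood
  -- every good spine sits at percolation level
  have hchain : ∀ t, Good t → ∀ k j : ℕ, ∃ u : List (Fin d),
      u.length = j ∧ t (k + j) = t k ++ u := by
    intro t ht k j
    induction j with
    | zero => exact ⟨[], rfl, by simp⟩
    | succ j ih =>
      obtain ⟨u, hu1, hu2⟩ := ih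
      obtain ⟨v, hv⟩ := (ht (k + j)).2.2
      have hv1 : v.length = 1 := by
        have h1 := (ht (k + j)).1
        have h2 := (ht (k + j + 1)).1
        have := congrArg List.length hv
        simp [h1] at this
        omega
      exact ⟨u ++ v, by simp [hu1, hv1], by
        rw [show k + (j+1) = (k + j) + 1 from rfl, ← hv, hu2, List.append_assoc]⟩
  have hstep : ∀ t, Good t → ∀ k : ℕ, ∃ c : Fin d, t (k + 1) = t k ++ [c] := by
    intro t ht k
    obtain ⟨u, hu1, hu2⟩ := hchain t ht k 1
    obtain ⟨c, rfl⟩ : ∃ c : Fin d, u = [c] := by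
      cases u with
      | nil => simp at hu1
      | cons a r =>
        cases r with
        | nil => exact ⟨a, rfl⟩
        | cons b s => simp at hu1
    exact ⟨c, hu2⟩
  have hzeroform : ∀ t, Good t → ∃ c : Fin d, t 0 = [c] := by
    intro t ht
    have h1 := (ht 0).1
    cases h : t 0 with
    | nil => rw [h] at h1; simp at h1
    | cons a r =>
      rw [h] at h1
      cases r with
      | nil => exact ⟨a, rfl⟩
      | cons b s => simp at h1
  have hrayW : ∀ t, Good t → ∀ k, UniqueSpine.Wx d α U (t k) ω = percTime d α U ω := by
    intro t ht k
    refine le_antisymm (iSup_le fun j => ?_) ?_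
    · obtain ⟨u, hu1, hu2⟩ := hchain t ht k j
      calc UniqueSpine.Mx d α U (t k) j ω
          ≤ ENNReal.ofReal (pTime d α U (t k ++ u) ω) := UniqueSpine.Mx_le (t k) u hu1
        _ = ENNReal.ofReal (pTime d α U (t (k + j)) ω) := by rw [← hu2]
        _ ≤ percTime d α U ω := (ht (k + j)).2.1.le
    · induction k with
      | zero =>
        obtain ⟨c, hc⟩ := hzeroform t ht
        rw [hc]
        calc percTime d α U ω = UniqueSpine.Wx d α U ([]) ω := hWnil.symm
          _ ≤ UniqueSpine.Wx d α U ([] ++ [c]) ω := UniqueSpine.Wx_mono_child hd0 hα0 hU0 ([]) c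
          _ = UniqueSpine.Wx d α U ([c]) ω := rfl
      | succ k ih =>
        obtain ⟨c, hc⟩ := hstep t ht k
        rw [hc]
        exact ih.trans (UniqueSpine.Wx_mono_child hd0 hα0 hU0 (t k) c)
  -- uniqueness
  have huniq : ∀ t₁ t₂, Good t₁ → Good t₂ → ∀ k, t₁ k = t₂ k := by
    intro t₁ t₂ h₁ h₂ k
    induction k with
    | zero =>
      obtain ⟨c₁, hc₁⟩ := hzeroform t₁ h₁
      obtain ⟨c₂, hc₂⟩ := hzeroform t₂ h₂
      rw [hc₁, hc₂]
      by_contra hne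
      have hcc : c₁ ≠ c₂ := fun h => hne (by rw [h])
      refine htieω ([]) c₁ c₂ hcc ⟨?_, ?_⟩
      · show UniqueSpine.Wx d α U ([c₁]) ω = UniqueSpine.Wx d α U ([c₂]) ω
        rw [← hc₁, ← hc₂, hrayW t₁ h₁ 0, hrayW t₂ h₂ 0]
      · show UniqueSpine.Wx d α U ([c₁]) ω ≠ ⊤
        rw [← hc₁, hrayW t₁ h₁ 0]
        exact hfinω.ne
    | succ k ih =>
      obtain ⟨c₁, hc₁⟩ := hstep t₁ h₁ k
      obtain ⟨c₂, hc₂⟩ := hstep t₂ h₂ k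
      rw [hc₁, hc₂, ← ih]
      by_contra hne
      have hcc : c₁ ≠ c₂ := fun h => hne (by rw [h])
      refine htieω (t₁ k) c₁ c₂ hcc ⟨?_, ?_⟩
      · rw [← hc₁, show t₁ k ++ [c₂] = t₂ k ++ [c₂] from by rw [ih], ← hc₂,
          hrayW t₁ h₁ (k+1), hrayW t₂ h₂ (k+1)]
      · rw [← hc₁, hrayW t₁ h₁ (k+1)]
        exact hfinω.ne
  -- existence
  have hpick : ∀ x : List (Fin d), ∃ c : Fin d,
      UniqueSpine.Wx d α U (x ++ [c]) ω = UniqueSpine.Wx d α U x ω :=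
    fun x => UniqueSpine.Wx_attain hd0 hα0 hU0 x
  choose pick hpickspec using hpick
  set aux : ℕ → List (Fin d) :=
    fun n => Nat.rec (motive := fun _ => List (Fin d)) ([]) (fun _ l => l ++ [pick l]) n
    with haux
  have hauxS : ∀ n, aux (n + 1) = aux n ++ [pick (aux n)] := fun n => rfl
  have hlen : ∀ n, (aux n).length = n := by
    intro n
    induction n with
    | zero => rfl
    | succ n ih => rw [hauxS]; simp [ih]
  have hW : ∀ n, UniqueSpine.Wx d α U (aux n) ω = percTime d α U ω := by
    intro n
    induction n with
    | zero => exact hWnil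
    | succ n ih => rw [hauxS, hpickspec (aux n), ih]
  have hGoodaux : Good (fun k => aux (k + 1)) := by
    intro k
    refine ⟨hlen (k + 1), ?_, ?_⟩
    · calc ENNReal.ofReal (pTime d α U (aux (k+1)) ω)
          < UniqueSpine.Mx d α U (aux (k+1)) 1 ω :=
            UniqueSpine.pTime_lt_Mx_one hd0 hα0 hposω _
        _ ≤ UniqueSpine.Wx d α U (aux (k+1)) ω := UniqueSpine.Mx_le_Wx _ 1
        _ = percTime d α U ω := hW (k+1)
    · show aux (k+1) <+: aux (k+1+1)
      rw [hauxS (k+1)]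
      exact List.prefix_append _ _
  exact ⟨fun k => aux (k + 1), hGoodaux,
    fun t ht => funext fun k => huniq t (fun k => aux (k + 1)) ht hGoodaux k⟩
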